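/- Every finite tournament can be transformed into a transitive tournament (directed acyclic orientation of the complete graph) by a sequence of at most (n² − n)/4 single edge flips, where n is the number of vertices, such that each individual flip strictly decreases the number of directed 3-cycles. -/

import Mathlib

set_option linter.unusedSectionVars false

variable {V : Type*} [Fintype V] [DecidableEq V]

/-- Number of directed 3-cycles, counted as ordered triples `(u, v, w)` with
`u → v → w → u`. -/
def N3 (r : V → V → Bool) : ℕ :=
  (Finset.univ.filter fun t : V × V × V =>
    r t.1 t.2.1 = true ∧ r t.2.1 t.2.2 = true ∧ r t.2.2 t.1 = true).card

/-- A single edge flip that strictly decreases the number of directed 3-cycles. -/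
def Flip (r r' : V → V → Bool) : Prop :=
  ∃ x y : V, r x y = true ∧
    r' = (fun u v =>
      if u = x ∧ v = y then false else if u = y ∧ v = x then true else r u v) ∧
    N3 r' < N3 r

open Finset

section Helpers

/-- The result of flipping edge `(a,b)`. -/
def flipf (a b : V) (r : V → V → Bool) : V → V → Bool :=
  fun u v => if u = a ∧ v = b then false else if u = b ∧ v = a then true else r u v

/-- In-degree of a vertex. -/
def indeg (r : V → V → Bool) (x : V) : ℕ :=
  (Finset.univ.filter fun u => r u x = true).card

/-- Cycle predicate on ordered triples. -/
def cyc (r : V → V → Bool) (t : V × V × V) : Prop :=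
  r t.1 t.2.1 = true ∧ r t.2.1 t.2.2 = true ∧ r t.2.2 t.1 = true

/-- The triple `t` uses the ordered pair `(a,b)` as one of its three edges. -/
def usesE (a b : V) (t : V × V × V) : Prop :=
  (t.1 = a ∧ t.2.1 = b) ∨ (t.2.1 = a ∧ t.2.2 = b) ∨ (t.2.2 = a ∧ t.1 = b)

instance (a b : V) : DecidablePred (usesE a b) := fun t => by unfold usesE; infer_instance
instance (r : V → V → Bool) : DecidablePred (cyc r) := fun t => by unfold cyc; infer_instance

variable {a b : V} {r : V → V → Bool}

lemma flipf_ab : flipf a b r a b = false := by simp [flipf]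

lemma flipf_ba (hab : a ≠ b) : flipf a b r b a = true := by
  simp [flipf, hab, Ne.symm hab]

lemma flipf_other {u v : V} (h1 : ¬(u = a ∧ v = b)) (h2 : ¬(u = b ∧ v = a)) :
    flipf a b r u v = r u v := by
  simp [flipf, h1, h2]

lemma flipf_irr (hab : a ≠ b) (hirr : ∀ v, r v v = false) :
    ∀ v, flipf a b r v v = false := by
  intro v
  unfold flipf
  split_ifs with h1 h2
  · rfl
  · exact absurd (h2.2.symm.trans h2.1) hab
  · exact hirr v

lemma flipf_tour (hab : a ≠ b) (htour : ∀ u v, u ≠ v → r u v = !r v u) :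
    ∀ u v, u ≠ v → flipf a b r u v = !flipf a b r v u := by
  intro u v huv
  by_cases h1 : u = a ∧ v = b
  · obtain ⟨rfl, rfl⟩ := h1
    rw [flipf_ab, flipf_ba hab]
    rfl
  · by_cases h2 : u = b ∧ v = a
    · obtain ⟨rfl, rfl⟩ := h2
      rw [flipf_ba hab, flipf_ab]
      rfl
    · rw [flipf_other h1 h2,
        flipf_other (fun h => h2 ⟨h.2, h.1⟩) (fun h => h1 ⟨h.2, h.1⟩),
        htour u v huv]

lemma tour_cases (htour : ∀ u v, u ≠ v → r u v = !r v u) {u v : V} (huv : u ≠ v) :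
    r u v = true ∨ r v u = true := by
  have this := htour u v huv
  cases h : r v u
  · left; rw [h] at this; exact this
  · right; rfl

lemma tour_not_both (htour : ∀ u v, u ≠ v → r u v = !r v u) {u v : V} (huv : u ≠ v)
    (h : r u v = true) : r v u = false := by
  have this := htour u v huv
  rw [h] at this
  cases hvu : r v u
  · rfl
  · rw [hvu] at this; exact absurd this (by decide)

lemma ne_of_r (hirr : ∀ v, r v v = false) {u v : V} (h : r u v = true) : u ≠ v := by
  rintro rfl; rw [hirr u] at h; exact Bool.false_ne_true h

/-- Splitting the in-degree of `a` and `b`: the key inequality. -/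
lemma card_created_lt_destroyed (hirr : ∀ v, r v v = false)
    (htour : ∀ u v, u ≠ v → r u v = !r v u)
    (hr : r a b = true) (hd : indeg r b ≤ indeg r a) :
    (univ.filter fun w => r a w = true ∧ r w b = true).card <
      (univ.filter fun w => r b w = true ∧ r w a = true).card := by
  have hab : a ≠ b := ne_of_r hirr hr
  have hba : r b a = false := tour_not_both htour hab hr
  -- split indeg r a
  have ha : (univ.filter fun u => r u a = true) =
      (univ.filter fun w => r b w = true ∧ r w a = true) ∪
      (univ.filter fun w => r w a = true ∧ r w b = true) := by
    ext u
    simp only [mem_union, mem_filter, mem_univ, true_and]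
    constructor
    · intro hu
      have hub : u ≠ b := by
        rintro rfl; rw [hu] at hba; exact absurd hba (by decide)
      rcases tour_cases htour hub with h | h
      · exact Or.inr ⟨hu, h⟩
      · exact Or.inl ⟨h, hu⟩
    · rintro (⟨_, h⟩ | ⟨h, _⟩) <;> exact h
  have hadisj : Disjoint (univ.filter fun w => r b w = true ∧ r w a = true)
      (univ.filter fun w => r w a = true ∧ r w b = true) := by
    rw [disjoint_left]
    intro u h1 h2
    simp only [mem_filter, mem_univ, true_and] at h1 h2
    have hub : u ≠ b := ne_of_r hirr h2.2
    rw [tour_not_both htour (Ne.symm hub) h1.1] at h2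
    exact Bool.false_ne_true h2.2
  -- split indeg r b
  have hbset : (univ.filter fun u => r u b = true) =
      (univ.filter fun w => r a w = true ∧ r w b = true) ∪
      insert a (univ.filter fun w => r w a = true ∧ r w b = true) := by
    ext u
    simp only [mem_union, mem_insert, mem_filter, mem_univ, true_and]
    constructor
    · intro hu
      by_cases hua : u = a
      · exact Or.inr (Or.inl hua)
      · rcases tour_cases htour hua with h | h
        · exact Or.inr (Or.inr ⟨h, hu⟩)
        · exact Or.inl ⟨h, hu⟩
    · rintro (⟨_, h⟩ | rfl | ⟨_, h⟩)
      · exact h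
      · exact hr
      · exact h
  have hbdisj : Disjoint (univ.filter fun w => r a w = true ∧ r w b = true)
      (insert a (univ.filter fun w => r w a = true ∧ r w b = true)) := by
    rw [disjoint_left]
    intro u h1 h2
    simp only [mem_filter, mem_univ, true_and] at h1
    simp only [mem_insert, mem_filter, mem_univ, true_and] at h2
    rcases h2 with rfl | h2
    · rw [hirr] at h1; exact Bool.false_ne_true h1.1
    · rw [tour_not_both htour (ne_of_r hirr h2.1).symm h1.1] at h2
      exact Bool.false_ne_true h2.1
  have hanotin : a ∉ (univ.filter fun w => r w a = true ∧ r w b = true) := by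
    simp [hirr a]
  have e1 : indeg r a = (univ.filter fun w => r b w = true ∧ r w a = true).card +
      (univ.filter fun w => r w a = true ∧ r w b = true).card := by
    rw [indeg, ha, card_union_of_disjoint hadisj]
  have e2 : indeg r b = (univ.filter fun w => r a w = true ∧ r w b = true).card +
      ((univ.filter fun w => r w a = true ∧ r w b = true).card + 1) := by
    rw [indeg, hbset, card_union_of_disjoint hbdisj, card_insert_of_notMem hanotin]
  omega

lemma uses_card (hirr : ∀ v, r v v = false) (hab : a ≠ b) (hr : r a b = true) :
    (univ.filter fun t : V × V × V => cyc r t ∧ usesE a b t).card =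
      3 * (univ.filter fun w => r b w = true ∧ r w a = true).card := by
  set D := univ.filter fun w => r b w = true ∧ r w a = true with hD
  have hset : (univ.filter fun t : V × V × V => cyc r t ∧ usesE a b t) =
      (D.image fun w => ((a, b, w) : V × V × V)) ∪
      ((D.image fun w => ((w, a, b) : V × V × V)) ∪
       (D.image fun w => ((b, w, a) : V × V × V))) := by
    ext t
    obtain ⟨x, y, z⟩ := t
    simp only [mem_filter, mem_univ, true_and, mem_union, mem_image, hD]
    simp only [cyc, usesE, Prod.mk.injEq]
    constructor
    · rintro ⟨⟨c1, c2, c3⟩, (⟨rfl, rfl⟩ | ⟨rfl, rfl⟩ | ⟨rfl, rfl⟩)⟩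
      · exact Or.inl ⟨z, ⟨c2, c3⟩, rfl, rfl, rfl⟩
      · exact Or.inr (Or.inl ⟨x, ⟨c3, c1⟩, rfl, rfl, rfl⟩)
      · exact Or.inr (Or.inr ⟨y, ⟨c1, c2⟩, rfl, rfl, rfl⟩)
    · rintro (⟨w, ⟨h1, h2⟩, rfl, rfl, rfl⟩ | ⟨w, ⟨h1, h2⟩, rfl, rfl, rfl⟩ |
        ⟨w, ⟨h1, h2⟩, rfl, rfl, rfl⟩)
      · exact ⟨⟨hr, h1, h2⟩, Or.inl ⟨rfl, rfl⟩⟩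
      · exact ⟨⟨h2, hr, h1⟩, Or.inr (Or.inl ⟨rfl, rfl⟩)⟩
      · exact ⟨⟨h1, h2, hr⟩, Or.inr (Or.inr ⟨rfl, rfl⟩)⟩
  have inj1 : Function.Injective (fun w => ((a, b, w) : V × V × V)) := by
    intro w w' h; simpa using h
  have inj2 : Function.Injective (fun w => ((w, a, b) : V × V × V)) := by
    intro w w' h; simpa using h
  have inj3 : Function.Injective (fun w => ((b, w, a) : V × V × V)) := by
    intro w w' h; simpa using h
  have d23 : Disjoint (D.image fun w => ((w, a, b) : V × V × V))
      (D.image fun w => ((b, w, a) : V × V × V)) := by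
    rw [disjoint_left]
    rintro ⟨x, y, z⟩ ht1 ht2
    simp only [mem_image, Prod.mk.injEq] at ht1 ht2
    obtain ⟨w, _, rfl, rfl, rfl⟩ := ht1
    obtain ⟨w', _, _, _, h⟩ := ht2
    exact hab h
  have d123 : Disjoint (D.image fun w => ((a, b, w) : V × V × V))
      ((D.image fun w => ((w, a, b) : V × V × V)) ∪
       (D.image fun w => ((b, w, a) : V × V × V))) := by
    rw [disjoint_left]
    rintro ⟨x, y, z⟩ ht1 ht2
    simp only [mem_union, mem_image, Prod.mk.injEq] at ht1 ht2
    obtain ⟨w, _, rfl, rfl, rfl⟩ := ht1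
    rcases ht2 with ⟨w', _, _, h, _⟩ | ⟨w', _, h, _, _⟩
    · exact hab h
    · exact hab h.symm
  rw [hset, card_union_of_disjoint d123, card_union_of_disjoint d23,
    card_image_of_injective _ inj1, card_image_of_injective _ inj2,
    card_image_of_injective _ inj3]
  ring

lemma N3_flipf_lt (hirr : ∀ v, r v v = false)
    (htour : ∀ u v, u ≠ v → r u v = !r v u)
    (hr : r a b = true) (hd : indeg r b ≤ indeg r a) :
    N3 (flipf a b r) < N3 r := by
  have hab : a ≠ b := ne_of_r hirr hr
  set r' := flipf a b r with hr'def
  have hirr' : ∀ v, r' v v = false := flipf_irr hab hirr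
  have htour' : ∀ u v, u ≠ v → r' u v = !r' v u := flipf_tour hab htour
  have hba' : r' b a = true := flipf_ba hab
  have hab' : r' a b = false := flipf_ab
  have hba : r b a = false := tour_not_both htour hab hr
  have n3r : N3 r = (univ.filter (cyc r)).card := by
    unfold N3
    congr 1
  have n3r' : N3 r' = (univ.filter (cyc r')).card := by
    unfold N3
    congr 1
  have split1 := Finset.card_filter_add_card_filter_not
    (s := univ.filter (cyc r)) (p := usesE a b)
  rw [filter_filter, filter_filter] at split1
  have split2 := Finset.card_filter_add_card_filter_not
    (s := univ.filter (cyc r')) (p := usesE b a)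
  rw [filter_filter, filter_filter] at split2
  have hK : (univ.filter fun t : V × V × V => cyc r t ∧ ¬ usesE a b t) =
      (univ.filter fun t : V × V × V => cyc r' t ∧ ¬ usesE b a t) := by
    ext t
    obtain ⟨x, y, z⟩ := t
    simp only [mem_filter, mem_univ, true_and, cyc, usesE, not_or]
    constructor
    · rintro ⟨⟨c1, c2, c3⟩, hn1, hn2, hn3⟩
      have nba1 : ¬(x = b ∧ y = a) := by
        rintro ⟨rfl, rfl⟩; rw [c1] at hba; exact absurd hba (by decide)
      have nba2 : ¬(y = b ∧ z = a) := by
        rintro ⟨rfl, rfl⟩; rw [c2] at hba; exact absurd hba (by decide)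
      have nba3 : ¬(z = b ∧ x = a) := by
        rintro ⟨rfl, rfl⟩; rw [c3] at hba; exact absurd hba (by decide)
      refine ⟨⟨?_, ?_, ?_⟩, nba1, nba2, nba3⟩
      · rw [hr'def, flipf_other hn1 nba1]; exact c1
      · rw [hr'def, flipf_other hn2 nba2]; exact c2
      · rw [hr'def, flipf_other hn3 nba3]; exact c3
    · rintro ⟨⟨c1, c2, c3⟩, hn1, hn2, hn3⟩
      have nab1 : ¬(x = a ∧ y = b) := by
        rintro ⟨rfl, rfl⟩; rw [hab'] at c1; exact absurd c1 (by decide)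
      have nab2 : ¬(y = a ∧ z = b) := by
        rintro ⟨rfl, rfl⟩; rw [hab'] at c2; exact absurd c2 (by decide)
      have nab3 : ¬(z = a ∧ x = b) := by
        rintro ⟨rfl, rfl⟩; rw [hab'] at c3; exact absurd c3 (by decide)
      rw [hr'def, flipf_other nab1 hn1] at c1
      rw [hr'def, flipf_other nab2 hn2] at c2
      rw [hr'def, flipf_other nab3 hn3] at c3
      exact ⟨⟨c1, c2, c3⟩, nab1, nab2, nab3⟩
  have u1 := uses_card (r := r) hirr hab hr
  have u2 := uses_card (r := r') hirr' (Ne.symm hab) hba'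
  have hC : (univ.filter fun w => r' a w = true ∧ r' w b = true) =
      (univ.filter fun w => r a w = true ∧ r w b = true) := by
    ext w
    simp only [mem_filter, mem_univ, true_and]
    by_cases hwa : w = a
    · subst hwa
      simp [hirr' w, hirr w]
    · by_cases hwb : w = b
      · subst hwb
        simp [hirr' w, hirr w]
      · rw [hr'def, flipf_other (fun h => hwb h.2) (fun h => hab h.1),
          flipf_other (fun h => hwa h.1) (fun h => hwb h.1)]
  have hCD := card_created_lt_destroyed hirr htour hr hd
  rw [hC] at u2
  rw [hK] at split1
  rw [n3r, n3r']
  omega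

end Helpers

/-- TInvariant for the outer induction. -/
def TInv (s : Finset V) (r : V → V → Bool) (g : V → ℕ) : Prop :=
  (∀ u ∉ s, ∀ v ∈ s, r u v = true) ∧
  (∀ u ∉ s, ∀ v ∉ s, r u v = true → g u < g v) ∧
  (∀ u ∉ s, g u < Fintype.card V - s.card)

lemma chain_append_getLast {α : Type*} {R : α → α → Prop} :
    ∀ (l₁ : List α) (a : α) (l₂ : List α), List.Chain R a l₁ →
      List.Chain R ((a :: l₁).getLast (List.cons_ne_nil _ _)) l₂ →
      List.Chain R a (l₁ ++ l₂) ∧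
        (a :: (l₁ ++ l₂)).getLast (List.cons_ne_nil _ _) =
          ((a :: l₁).getLast (List.cons_ne_nil _ _) :: l₂).getLast (List.cons_ne_nil _ _) := by
  intro l₁
  induction l₁ with
  | nil =>
    intro a l₂ _ h2
    simp only [List.nil_append, List.getLast_singleton] at h2 ⊢
    exact ⟨h2, trivial⟩
  | cons c l ih =>
    intro a l₂ h1 h2
    unfold List.Chain at h1
    rw [List.chain_cons] at h1
    rw [List.getLast_cons_cons] at h2
    obtain ⟨hc, hgl⟩ := ih c l₂ h1.2 h2
    constructor
    · rw [List.cons_append]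
      unfold List.Chain
      rw [List.chain_cons]
      exact ⟨h1.1, hc⟩
    · rw [List.cons_append, List.getLast_cons_cons, List.getLast_cons_cons]
      rw [← List.getLast_cons_cons (a := c)] at hgl
      rw [List.getLast_cons_cons] at hgl
      exact hgl

lemma inner_loop (s : Finset V) (b : V) (hb : b ∈ s) (g : V → ℕ) :
    ∀ (k : ℕ) (r : V → V → Bool), (s.filter fun u => r u b = true).card = k →
    (∀ v, r v v = false) → (∀ u v, u ≠ v → r u v = !r v u) →
    TInv s r g →
    (∀ x ∈ s, r x b = true → indeg r b ≤ indeg r x) →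
    ∃ l : List (V → V → Bool), l.length = k ∧ List.Chain Flip r l ∧
      ((∀ v, (r :: l).getLast (List.cons_ne_nil _ _) v v = false) ∧
       (∀ u v, u ≠ v → (r :: l).getLast (List.cons_ne_nil _ _) u v
          = !(r :: l).getLast (List.cons_ne_nil _ _) v u) ∧
       TInv s ((r :: l).getLast (List.cons_ne_nil _ _)) g ∧
       ∀ v ∈ s, v ≠ b → (r :: l).getLast (List.cons_ne_nil _ _) b v = true) := by
  intro k
  induction k with
  | zero =>
    intro r hcard hirr htour hinv hmin
    refine ⟨[], rfl, List.Chain.nil, ?_⟩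
    simp only [List.getLast_singleton]
    refine ⟨hirr, htour, hinv, ?_⟩
    intro v hv hvb
    have hnm : v ∉ s.filter (fun u => r u b = true) := by
      rw [card_eq_zero] at hcard
      rw [hcard]
      exact notMem_empty v
    rw [mem_filter] at hnm
    have hvb' : r v b = false := by
      cases h : r v b
      · rfl
      · exact absurd ⟨hv, h⟩ hnm
    rw [htour b v (Ne.symm hvb), hvb']
    rfl
  | succ k ih =>
    intro r hcard hirr htour hinv hmin
    have hne : (s.filter fun u => r u b = true).Nonempty := by
      rw [← card_pos, hcard]; omega
    obtain ⟨a, ha⟩ := hne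
    rw [mem_filter] at ha
    obtain ⟨has, harb⟩ := ha
    have hab : a ≠ b := ne_of_r hirr harb
    set r' := flipf a b r with hr'def
    have hirr' : ∀ v, r' v v = false := flipf_irr hab hirr
    have htour' : ∀ u v, u ≠ v → r' u v = !r' v u := flipf_tour hab htour
    have hN3 : N3 r' < N3 r := N3_flipf_lt hirr htour harb (hmin a has harb)
    have hflip : Flip r r' := ⟨a, b, harb, rfl, hN3⟩
    have hr'b : ∀ u, u ≠ a → r' u b = r u b := fun u hua =>
      flipf_other (fun h => hua h.1) (fun h => hab h.2.symm)
    have hr'ab : r' a b = false := flipf_ab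
    have hfilter : (s.filter fun u => r' u b = true) =
        (s.filter fun u => r u b = true).erase a := by
      ext u
      simp only [mem_erase, mem_filter]
      constructor
      · rintro ⟨hus, hub⟩
        have hua : u ≠ a := by
          rintro rfl
          rw [hr'ab] at hub
          exact absurd hub (by decide)
        rw [hr'b u hua] at hub
        exact ⟨hua, hus, hub⟩
      · rintro ⟨hua, hus, hub⟩
        exact ⟨hus, by rw [hr'b u hua]; exact hub⟩
    have hcard' : (s.filter fun u => r' u b = true).card = k := by
      rw [hfilter, card_erase_of_mem (mem_filter.mpr ⟨has, harb⟩), hcard]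
      omega
    have houtside : ∀ u v, u ∉ s → r' u v = r u v := by
      intro u v hu
      apply flipf_other
      · rintro ⟨rfl, rfl⟩; exact hu has
      · rintro ⟨rfl, rfl⟩; exact hu hb
    have hinv' : TInv s r' g := by
      obtain ⟨i1, i2, i3⟩ := hinv
      refine ⟨?_, ?_, i3⟩
      · intro u hu v hv
        rw [houtside u v hu]
        exact i1 u hu v hv
      · intro u hu v hv huv
        rw [houtside u v hu] at huv
        exact i2 u hu v hv huv
    have hufilter : (univ.filter fun u => r' u b = true) =
        (univ.filter fun u => r u b = true).erase a := by
      ext u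
      simp only [mem_erase, mem_filter, mem_univ, true_and]
      constructor
      · intro hub
        have hua : u ≠ a := by
          rintro rfl
          rw [hr'ab] at hub
          exact absurd hub (by decide)
        rw [hr'b u hua] at hub
        exact ⟨hua, hub⟩
      · rintro ⟨hua, hub⟩
        rw [hr'b u hua]
        exact hub
    have hposb : 0 < (univ.filter fun u => r u b = true).card :=
      card_pos.mpr ⟨a, mem_filter.mpr ⟨mem_univ a, harb⟩⟩
    have hindegb : indeg r' b + 1 = indeg r b := by
      unfold indeg
      rw [hufilter, card_erase_of_mem (mem_filter.mpr ⟨mem_univ a, harb⟩)]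
      omega
    have hindegx : ∀ x, x ≠ a → x ≠ b → indeg r' x = indeg r x := by
      intro x hxa hxb
      unfold indeg
      congr 1
      apply filter_congr
      intro u _
      rw [hr'def, flipf_other (fun h => hxb h.2) (fun h => hxa h.2)]
    have hmin' : ∀ x ∈ s, r' x b = true → indeg r' b ≤ indeg r' x := by
      intro x hxs hxb
      have hxa : x ≠ a := by
        rintro rfl
        rw [hr'ab] at hxb
        exact absurd hxb (by decide)
      have hxbne : x ≠ b := ne_of_r hirr' hxb
      rw [hr'b x hxa] at hxb
      rw [hindegx x hxa hxbne]
      have := hmin x hxs hxb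
      omega
    obtain ⟨l, hlen, hchain, hprops⟩ := ih r' hcard' hirr' htour' hinv' hmin'
    refine ⟨r' :: l, by simp [hlen], List.chain_cons.mpr ⟨hflip, hchain⟩, ?_⟩
    rw [List.getLast_cons_cons]
    exact hprops

lemma outer_loop : ∀ (n : ℕ) (s : Finset V), s.card = n →
    ∀ (r : V → V → Bool) (g : V → ℕ),
    (∀ v, r v v = false) → (∀ u v, u ≠ v → r u v = !r v u) → TInv s r g →
    ∃ l : List (V → V → Bool), l.length ≤ (n ^ 2 - n) / 4 ∧ List.Chain Flip r l ∧
      ∃ g' : V → ℕ, ∀ u v : V,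
        (r :: l).getLast (List.cons_ne_nil _ _) u v = true → g' u < g' v := by
  intro n
  induction n with
  | zero =>
    intro s hs r g hirr htour hinv
    rw [card_eq_zero] at hs
    subst hs
    refine ⟨[], by simp, List.Chain.nil, g, ?_⟩
    simp only [List.getLast_singleton]
    intro u v huv
    exact hinv.2.1 u (notMem_empty u) v (notMem_empty v) huv
  | succ n ih =>
    intro s hs r g hirr htour hinv
    have hsne : s.Nonempty := card_pos.mp (by omega)
    obtain ⟨b, hbs, hbmin⟩ :=
      exists_min_image s (fun x => (s.filter fun u => r u x = true).card) hsne
    have hindeg : ∀ x ∈ s, indeg r x =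
        (Fintype.card V - s.card) + (s.filter fun u => r u x = true).card := by
      intro x hxs
      have hset : (univ.filter fun u => r u x = true) =
          (univ \ s) ∪ (s.filter fun u => r u x = true) := by
        ext u
        simp only [mem_union, mem_sdiff, mem_filter, mem_univ, true_and]
        constructor
        · intro hu
          by_cases hus : u ∈ s
          · exact Or.inr ⟨hus, hu⟩
          · exact Or.inl hus
        · rintro (hus | ⟨_, hu⟩)
          · exact hinv.1 u hus x hxs
          · exact hu
      have hdisj : Disjoint (univ \ s) (s.filter fun u => r u x = true) := by
        rw [disjoint_left]
        intro u hu1 hu2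
        rw [mem_sdiff] at hu1
        exact hu1.2 (mem_filter.mp hu2).1
      rw [indeg, hset, card_union_of_disjoint hdisj, card_sdiff_of_subset (subset_univ s), card_univ]
    have hmin : ∀ x ∈ s, r x b = true → indeg r b ≤ indeg r x := by
      intro x hxs _
      rw [hindeg b hbs, hindeg x hxs]
      exact Nat.add_le_add_left (hbmin x hxs) _
    obtain ⟨l₁, hlen1, hchain1, hirr1, htour1, hinv1, hsrc1⟩ :=
      inner_loop s b hbs g _ r rfl hirr htour hinv hmin
    -- bound 2 * fb ≤ n
    set fb := (s.filter fun u => r u b = true).card with hfbdef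
    have hfb : 2 * fb ≤ n := by
      set F := (s ×ˢ s).filter (fun p => r p.1 p.2 = true) with hF
      set G := (s ×ˢ s).filter (fun p => r p.2 p.1 = true) with hG
      have hsplit := Finset.card_filter_add_card_filter_not
        (s := s ×ˢ s) (p := fun p => r p.1 p.2 = true)
      have hnegeq : (s ×ˢ s).filter (fun p => ¬(r p.1 p.2 = true)) = G ∪ s.diag := by
        ext ⟨u, v⟩
        simp only [hG, mem_union, mem_filter, mem_product, Finset.mem_diag]
        constructor
        · rintro ⟨⟨hu, hv⟩, hp⟩
          by_cases huv : u = v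
          · exact Or.inr ⟨hu, huv⟩
          · rcases tour_cases htour huv with h | h
            · exact absurd h hp
            · exact Or.inl ⟨⟨hu, hv⟩, h⟩
        · rintro (⟨⟨hu, hv⟩, h⟩ | ⟨hu, rfl⟩)
          · have huv : u ≠ v := (ne_of_r hirr h).symm
            refine ⟨⟨hu, hv⟩, ?_⟩
            rw [tour_not_both htour (Ne.symm huv) h]
            exact fun h' => absurd h' (by decide)
          · exact ⟨⟨hu, hu⟩, by rw [hirr u]; exact fun h' => absurd h' (by decide)⟩
      have hGdiag : Disjoint G (s.diag) := by
        rw [disjoint_left]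
        rintro ⟨u, v⟩ h1 h2
        simp only [Finset.mem_diag] at h2
        obtain ⟨hu2, rfl⟩ := h2
        simp only [hG, mem_filter] at h1
        rw [hirr u] at h1
        exact absurd h1.2 (by decide)
      have hFG : F.card = G.card := by
        apply card_bij (fun p _ => (p.2, p.1))
        · rintro ⟨u, v⟩ hp
          rw [hF, mem_filter, mem_product] at hp
          rw [hG, mem_filter, mem_product]
          exact ⟨⟨hp.1.2, hp.1.1⟩, hp.2⟩
        · rintro ⟨u, v⟩ _ ⟨u', v'⟩ _ h
          simp only [Prod.mk.injEq] at h ⊢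
          exact ⟨h.2, h.1⟩
        · rintro ⟨u, v⟩ hp
          refine ⟨(v, u), ?_, rfl⟩
          rw [hG, mem_filter, mem_product] at hp
          rw [hF, mem_filter, mem_product]
          exact ⟨⟨hp.1.2, hp.1.1⟩, hp.2⟩
      have hFsum : F = s.biUnion (fun x =>
          (s.filter fun u => r u x = true).image (fun u => (u, x))) := by
        ext ⟨u, x⟩
        simp only [hF, mem_biUnion, mem_filter, mem_product, mem_image, Prod.mk.injEq]
        constructor
        · rintro ⟨⟨hu, hx⟩, hr⟩
          exact ⟨x, hx, u, ⟨hu, hr⟩, rfl, rfl⟩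
        · rintro ⟨y, hy, v, ⟨hv, hr⟩, rfl, rfl⟩
          exact ⟨⟨hv, hy⟩, hr⟩
      have hFcard : F.card = ∑ x ∈ s, (s.filter fun u => r u x = true).card := by
        rw [hFsum, card_biUnion]
        · apply Finset.sum_congr rfl
          intro x _
          exact card_image_of_injective _ (fun u u' h => (Prod.mk.injEq _ _ _ _ ▸ h : _ ∧ _).1)
        · intro x _ y _ hxy
          rw [Function.onFun, disjoint_left]
          rintro ⟨u, v⟩ h1 h2
          simp only [mem_image, Prod.mk.injEq] at h1 h2
          obtain ⟨_, _, _, rfl⟩ := h1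
          obtain ⟨_, _, _, h⟩ := h2
          exact hxy h.symm
      have hsumge : s.card * fb ≤ ∑ x ∈ s, (s.filter fun u => r u x = true).card := by
        have := Finset.card_nsmul_le_sum s
          (fun x => (s.filter fun u => r u x = true).card) fb (fun x hx => hbmin x hx)
        simpa [smul_eq_mul] using this
      have hprod : (s ×ˢ s).card = s.card * s.card := card_product s s
      have hdiag : (s.diag).card = s.card := Finset.diag_card s
      have hunion : ((s ×ˢ s).filter (fun p => ¬(r p.1 p.2 = true))).card
          = G.card + s.card := by
        rw [hnegeq, card_union_of_disjoint hGdiag, hdiag]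
      have hFF : F.card + F.card = (n + 1) * n := by
        have h1 : F.card + (G.card + s.card) = (n + 1) * (n + 1) := by
          rw [← hunion, hsplit, hprod, hs]
        rw [← hFG, hs] at h1
        have hid : (n + 1) * (n + 1) = (n + 1) * n + (n + 1) := by ring
        omega
      have hsum2 : (n + 1) * fb ≤ F.card := by
        rw [hFcard, ← hs]
        exact hsumge
      have hmulle : (n + 1) * (2 * fb) ≤ (n + 1) * n := by
        calc (n + 1) * (2 * fb) = 2 * ((n + 1) * fb) := by ring
          _ ≤ 2 * F.card := Nat.mul_le_mul_left 2 hsum2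
          _ = F.card + F.card := by ring
          _ = (n + 1) * n := hFF
      exact Nat.le_of_mul_le_mul_left hmulle (by omega)
    -- new invariant on s.erase b
    set r₁ := (r :: l₁).getLast (List.cons_ne_nil _ _) with hr₁
    set g' := Function.update g b (Fintype.card V - s.card) with hg'
    have hgne : ∀ u, u ≠ b → g' u = g u := by
      intro u hub
      rw [hg', Function.update_apply, if_neg hub]
    have hgb : g' b = Fintype.card V - s.card := by
      rw [hg', Function.update_apply, if_pos rfl]
    have hcardle : s.card ≤ Fintype.card V := by
      rw [← card_univ]; exact card_le_univ s
    have hinv' : TInv (s.erase b) r₁ g' := by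
      obtain ⟨i1, i2, i3⟩ := hinv1
      refine ⟨?_, ?_, ?_⟩
      · intro u hu v hv
        rw [mem_erase] at hv
        by_cases hus : u ∈ s
        · have hub : u = b := by
            by_contra hub
            exact hu (mem_erase.mpr ⟨hub, hus⟩)
          rw [hub]
          exact hsrc1 v hv.2 hv.1
        · exact i1 u hus v hv.2
      · intro u hu v hv huv
        by_cases hus : u ∈ s
        · have hub : u = b := by
            by_contra hub
            exact hu (mem_erase.mpr ⟨hub, hus⟩)
          by_cases hvs : v ∈ s
          · have hvb : v = b := by
              by_contra hvb
              exact hv (mem_erase.mpr ⟨hvb, hvs⟩)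
            rw [hub, hvb, hirr1 b] at huv
            exact absurd huv (by decide)
          · have hvu : r₁ v u = true := i1 v hvs u hus
            have : u ≠ v := fun h => hvs (h ▸ hus)
            rw [htour1 u v this, hvu] at huv
            exact absurd huv (by decide)
        · have hub : u ≠ b := fun h => hus (h ▸ hbs)
          rw [hgne u hub]
          by_cases hvs : v ∈ s
          · have hvb : v = b := by
              by_contra hvb
              exact hv (mem_erase.mpr ⟨hvb, hvs⟩)
            subst hvb
            rw [hgb]
            exact i3 u hus
          · have hvb : v ≠ b := fun h => hvs (h ▸ hbs)
            rw [hgne v hvb]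
            exact i2 u hus v hvs huv
      · intro u hu
        have hce : (s.erase b).card = n := by
          rw [card_erase_of_mem hbs, hs]
          omega
        rw [hce]
        by_cases hus : u ∈ s
        · have hub : u = b := by
            by_contra hub
            exact hu (mem_erase.mpr ⟨hub, hus⟩)
          rw [hub, hgb, hs]
          omega
        · have hub : u ≠ b := fun h => hus (h ▸ hbs)
          rw [hgne u hub]
          have := i3 u hus
          rw [hs] at this
          omega
    obtain ⟨l₂, hlen2, hchain2, g'', hfinal⟩ :=
      ih (s.erase b) (by rw [card_erase_of_mem hbs, hs]; omega) r₁ g' hirr1 htour1 hinv'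
    obtain ⟨hch, hgl⟩ := chain_append_getLast l₁ r l₂ hchain1 hchain2
    refine ⟨l₁ ++ l₂, ?_, hch, g'', ?_⟩
    · rw [List.length_append, hlen1]
      rw [Nat.le_div_iff_mul_le (by norm_num : 0 < 4)]
      have h4 : l₂.length * 4 ≤ n ^ 2 - n := by
        calc l₂.length * 4 ≤ (n ^ 2 - n) / 4 * 4 := by omega
          _ ≤ n ^ 2 - n := Nat.div_mul_le_self _ _
      have h1 : n ≤ n ^ 2 := Nat.le_self_pow (by norm_num) n
      have hsq : (n + 1) ^ 2 = n ^ 2 + 2 * n + 1 := by ring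
      set m := n ^ 2 with hm
      set m' := (n + 1) ^ 2 with hm'
      omega
    · intro u v huv
      apply hfinal
      rwa [← hgl]

/-- Theorem A.3: every finite tournament can be transformed into a transitive
tournament (a directed acyclic orientation of the complete graph, i.e. one arising from a
linear order on the vertices) by a sequence of at most `(n² − n)/4` single edge flips, each of
which strictly decreases the number of directed 3-cycles. -/
theorem tournament_to_transitive (r : V → V → Bool)
    (hirr : ∀ v, r v v = false)
    (htour : ∀ u v, u ≠ v → r u v = !r v u) :
    ∃ l : List (V → V → Bool),
      l.length ≤ (Fintype.card V ^ 2 - Fintype.card V) / 4 ∧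
      List.Chain Flip r l ∧
      ∃ g : V → ℕ, ∀ u v : V,
        (r :: l).getLast (List.cons_ne_nil _ _) u v = true → g u < g v := by
  have hinv : TInv (univ : Finset V) r (fun _ => 0) := by
    refine ⟨?_, ?_, ?_⟩ <;> intro u hu <;> exact absurd (mem_univ u) hu
  obtain ⟨l, hlen, hchain, hg⟩ :=
    outer_loop (Fintype.card V) univ (card_univ) r (fun _ => 0) hirr htour hinv
  exact ⟨l, hlen, hchain, hg⟩
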